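/- Let g : [0,∞) → [0,∞) be continuous, increasing, positive for large arguments, with G(s) = ∫_0^s g(τ)dτ, and assume the Keller–Osserman condition ∫_{r₀}^∞ ds/√(G(s)) < ∞ for some r₀ > 0. Then lim_{s→∞} s/√(G(s)) = 0, lim_{s→∞} s/g(s) = 0, and lim_{s→∞} √(G(s))/g(s) = 0. -/

import Mathlib

open Set MeasureTheory Filter

/-- Keller–Osserman implies s/√G(s) → 0, s/g(s) → 0 and √G(s)/g(s) → 0 as s → ∞. -/
theorem stmt_6 (g : ℝ → ℝ)
    (hg_cont : ContinuousOn g (Ici 0))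
    (hg_mono : MonotoneOn g (Ici 0))
    (hg_nonneg : ∀ s ∈ Ici (0:ℝ), 0 ≤ g s)
    (hg_eventually_pos : ∃ s₁ : ℝ, ∀ s ≥ s₁, 0 < g s)
    (G : ℝ → ℝ) (hG : ∀ s, G s = ∫ τ in (0:ℝ)..s, g τ)
    (r₀ : ℝ) (hr₀ : 0 < r₀)
    (hKO : IntegrableOn (fun s => 1 / Real.sqrt (G s)) (Ioi r₀)) :
    Tendsto (fun s => s / Real.sqrt (G s)) atTop (nhds 0) ∧
    Tendsto (fun s => s / g s) atTop (nhds 0) ∧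
    Tendsto (fun s => Real.sqrt (G s) / g s) atTop (nhds 0) := by
  obtain ⟨s₁, hs₁⟩ := hg_eventually_pos
  set c : ℝ := max (max s₁ r₀) 0 with hc
  have hc0 : (0:ℝ) ≤ c := le_max_right _ _
  have hcs₁ : s₁ ≤ c := le_trans (le_max_left _ _) (le_max_left _ _)
  have hcr₀ : r₀ ≤ c := le_trans (le_max_right _ _) (le_max_left _ _)
  have hgc : 0 < g c := hs₁ c hcs₁
  -- interval integrability of g
  have hgint : ∀ u v : ℝ, 0 ≤ u → u ≤ v → IntervalIntegrable g MeasureTheory.volume u v := by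
    intro u v hu huv
    apply ContinuousOn.intervalIntegrable
    apply hg_cont.mono
    rw [uIcc_of_le huv]
    exact fun x hx => le_trans hu hx.1
  -- G difference
  have hGdiff : ∀ u v : ℝ, 0 ≤ u → u ≤ v → G v - G u = ∫ τ in u..v, g τ := by
    intro u v hu huv
    rw [hG, hG]
    exact intervalIntegral.integral_interval_sub_left (hgint 0 v (le_refl _) (le_trans hu huv))
      (hgint 0 u (le_refl _) hu)
  -- G is monotone
  have hGnonneg : ∀ s : ℝ, 0 ≤ s → 0 ≤ G s := by
    intro s hs
    rw [hG]
    apply intervalIntegral.integral_nonneg hs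
    intro x hx; exact hg_nonneg x hx.1
  have hGmono : ∀ u v : ℝ, 0 ≤ u → u ≤ v → G u ≤ G v := by
    intro u v hu huv
    have : 0 ≤ G v - G u := by
      rw [hGdiff u v hu huv]
      apply intervalIntegral.integral_nonneg huv
      intro x hx; exact hg_nonneg x (le_trans hu hx.1)
    linarith
  -- lower bound on increments
  have hGlow : ∀ u v : ℝ, 0 ≤ u → u ≤ v → (v - u) * g u ≤ G v - G u := by
    intro u v hu huv
    rw [hGdiff u v hu huv]
    have : ∫ τ in u..v, g u = (v - u) * g u := by
      simp [intervalIntegral.integral_const, smul_eq_mul]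
    rw [← this]
    apply intervalIntegral.integral_mono_on huv (intervalIntegrable_const) (hgint u v hu huv)
    intro x hx
    exact hg_mono hu (le_trans hu hx.1) hx.1
  -- upper bound G s ≤ s * g s
  have hGup : ∀ s : ℝ, 0 ≤ s → G s ≤ s * g s := by
    intro s hs
    rw [hG]
    have h2 : ∫ τ in (0:ℝ)..s, g s = s * g s := by
      simp [intervalIntegral.integral_const, smul_eq_mul]
    rw [← h2]
    apply intervalIntegral.integral_mono_on hs (hgint 0 s le_rfl hs) intervalIntegrable_const
    intro x hx
    exact hg_mono hx.1 hs hx.2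
  -- positivity of G past c+1
  have hGpos : ∀ s : ℝ, c + 1 ≤ s → 0 < G s := by
    intro s hsc
    have h1 : (s - c) * g c ≤ G s - G c := hGlow c s hc0 (by linarith)
    have h2 : 0 ≤ G c := hGnonneg c hc0
    nlinarith [hgc]
  set f : ℝ → ℝ := fun s => 1 / Real.sqrt (G s) with hf
  have hfnonneg : ∀ s, 0 ≤ f s := fun s => by positivity
  -- f antitone on [c+1, ∞)
  have hfanti : ∀ u v : ℝ, c + 1 ≤ u → u ≤ v → f v ≤ f u := by
    intro u v hu huv
    apply one_div_le_one_div_of_le (Real.sqrt_pos.mpr (hGpos u hu))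
    exact Real.sqrt_le_sqrt (hGmono u v (by linarith) huv)
  -- integrability of f past c+1
  have hfint : IntegrableOn f (Ioi (c + 1)) MeasureTheory.volume :=
    hKO.mono_set (fun x hx => lt_of_le_of_lt (show r₀ ≤ c + 1 by linarith) hx)
  have hfii : ∀ u v : ℝ, c + 1 ≤ u → u ≤ v → IntervalIntegrable f MeasureTheory.volume u v := by
    intro u v hu huv
    rw [intervalIntegrable_iff]
    apply hfint.mono_set
    rw [uIoc_of_le huv]
    intro x hx
    have := hx.1
    simp only [mem_Ioi]
    linarith
  -- tail integral tends to 0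
  have htail : Tendsto (fun t => ∫ x in (t/2)..t, f x) atTop (nhds 0) := by
    have hL := MeasureTheory.intervalIntegral_tendsto_integral_Ioi (c+1) hfint tendsto_id
    have hL2 := hL.comp (tendsto_id.atTop_div_const (two_pos))
    have := hL.sub hL2
    rw [sub_self] at this
    apply this.congr'
    filter_upwards [eventually_ge_atTop (2 * (c+1))] with t ht
    have h1 : c + 1 ≤ t / 2 := by linarith
    have h2 : t / 2 ≤ t := by linarith
    simp only [Function.comp, id]
    exact intervalIntegral.integral_interval_sub_left (hfii (c+1) t le_rfl (by linarith))
      (hfii (c+1) (t/2) le_rfl h1)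
  -- main claim: t * f t → 0
  have hmain : Tendsto (fun t => t * f t) atTop (nhds 0) := by
    have h2 : Tendsto (fun t => 2 * ∫ x in (t/2)..t, f x) atTop (nhds 0) := by
      have := htail.const_mul (2:ℝ); simpa using this
    apply tendsto_of_tendsto_of_tendsto_of_le_of_le' tendsto_const_nhds h2
    · filter_upwards [eventually_ge_atTop (0:ℝ)] with t ht
      exact mul_nonneg ht (hfnonneg t)
    · filter_upwards [eventually_ge_atTop (2 * (c+1))] with t ht
      have h1 : c + 1 ≤ t / 2 := by linarith
      have h2 : t / 2 ≤ t := by linarith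
      have hlow : (t - t/2) * f t ≤ ∫ x in (t/2)..t, f x := by
        have : ∫ x in (t/2)..t, f t = (t - t/2) * f t := by
          rw [intervalIntegral.integral_const, smul_eq_mul]
        rw [← this]
        apply intervalIntegral.integral_mono_on h2 intervalIntegrable_const
          (hfii (t/2) t h1 h2)
        intro x hx
        exact hfanti x t (by linarith [hx.1]) hx.2
      have : t - t/2 = t/2 := by ring
      rw [this] at hlow
      nlinarith [hfnonneg t]
  have h1 : Tendsto (fun s => s / Real.sqrt (G s)) atTop (nhds 0) := by
    apply hmain.congr
    intro s
    rw [hf]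
    ring
  -- key bound: eventually s / g s ≤ (s / √(G s))^2
  have hbound : ∀ᶠ s in atTop, s / g s ≤ (s / Real.sqrt (G s))^2 := by
    filter_upwards [eventually_ge_atTop (c + 1)] with s hs
    have hs0 : 0 < s := by linarith
    have hgs : 0 < g s := hs₁ s (by linarith)
    have hGs : 0 < G s := hGpos s hs
    have hsq : (s / Real.sqrt (G s))^2 = s^2 / G s := by
      rw [div_pow, Real.sq_sqrt hGs.le]
    rw [hsq, div_le_div_iff₀ hgs hGs]
    have := hGup s hs0.le
    nlinarith
  have hge0 : ∀ᶠ s in atTop, 0 ≤ s / g s := by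
    filter_upwards [eventually_ge_atTop (c + 1)] with s hs
    exact div_nonneg (by linarith) (hs₁ s (by linarith)).le
  have hsq0 : Tendsto (fun s => (s / Real.sqrt (G s))^2) atTop (nhds 0) := by
    have := h1.mul h1
    rw [mul_zero] at this
    apply this.congr
    intro s; ring
  have h2 : Tendsto (fun s => s / g s) atTop (nhds 0) :=
    tendsto_of_tendsto_of_tendsto_of_le_of_le' tendsto_const_nhds hsq0 hge0 hbound
  refine ⟨h1, h2, ?_⟩
  -- third claim: √G/g ≤ √(s/g)
  have hsqrt : Tendsto (fun s => Real.sqrt (s / g s)) atTop (nhds 0) := by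
    rw [show (0:ℝ) = Real.sqrt 0 by simp]
    exact (Real.continuous_sqrt.tendsto 0).comp h2
  apply tendsto_of_tendsto_of_tendsto_of_le_of_le' tendsto_const_nhds hsqrt
  · filter_upwards [eventually_ge_atTop (c + 1)] with s hs
    exact div_nonneg (Real.sqrt_nonneg _) (hs₁ s (by linarith)).le
  · filter_upwards [eventually_ge_atTop (c + 1)] with s hs
    have hs0 : 0 < s := by linarith
    have hgs : 0 < g s := hs₁ s (by linarith)
    have hGs : 0 < G s := hGpos s hs
    rw [Real.le_sqrt (div_nonneg (Real.sqrt_nonneg _) hgs.le) (div_nonneg hs0.le hgs.le)]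
    rw [div_pow, Real.sq_sqrt hGs.le, div_le_div_iff₀ (by positivity) hgs]
    have := hGup s hs0.le
    nlinarith
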